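/- Let the instance be proper of degree d: n ≥ m, n divisible by 8, the number k of large jobs (jobs of size exceeding OPT/(100·m^{1/4})) satisfies m − m^{3/4}/50 < k < m, and d = ⌈log₂(m−k)⌉. Let r = ⌈(m−2^d)/8 − √m/2⌉ and j = ⌊k − 8√m − 2^d⌋, and assume r ≥ 1 and j ≥ 1. Draw a permutation σ of {1,…,n} uniformly at random and let P↑ be the r-th largest job size among the first n/8 jobs of the order J^σ. Then P_σ[ P_j ≥ P↑ ≥ P_k ] ≥ 1/3, where P_i denotes the i-th largest job size of the whole instance. -/

import Mathlib

open Finset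

noncomputable section

/-- Load of machine `M` under schedule `f` (job `i` has size `p i`). -/
def mcLoad {n m : ℕ} (p : Fin n → ℝ) (f : Fin n → Fin m) (M : Fin m) : ℝ :=
  ∑ i ∈ Finset.univ.filter (fun i => f i = M), p i

/-- Minimum load of a schedule. -/
def minLoad {n m : ℕ} (p : Fin n → ℝ) (f : Fin n → Fin m) : ℝ :=
  ⨅ M : Fin m, mcLoad p f M

/-- The optimal (offline) minimum load of the instance. -/
def OPT {n : ℕ} (m : ℕ) (p : Fin n → ℝ) : ℝ :=
  ⨆ f : Fin n → Fin m, minLoad p f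

/-- The `i`-th largest job size (1-indexed), with `nthLargest p i = 0` for `i > n`. -/
def nthLargest {n : ℕ} (p : Fin n → ℝ) (i : ℕ) : ℝ :=
  ((List.ofFn p).mergeSort (fun a b => decide (b ≤ a))).getD (i - 1) 0

/-- `P↑`: the `r`-th largest job size among the first `n/8` jobs of the order `σ`
(the job arriving at position `a` is `σ a`). -/
def PupOf {n : ℕ} (p : Fin n → ℝ) (r : ℕ) (σ : Equiv.Perm (Fin n)) : ℝ :=
  nthLargest (fun a : Fin (n / 8) => p (σ (Fin.castLE (Nat.div_le_self n 8) a))) r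

end


namespace Stmt8Aux


/-- the descending-sort of the values of `q` -/
noncomputable def dsort {N : ℕ} (q : Fin N → ℝ) : List ℝ :=
  (List.ofFn q).mergeSort (fun a b => decide (b ≤ a))

lemma dsort_length {N : ℕ} (q : Fin N → ℝ) : (dsort q).length = N := by
  rw [dsort, List.length_mergeSort, List.length_ofFn]

lemma dsort_sorted {N : ℕ} (q : Fin N → ℝ) :
    List.Pairwise (· ≥ ·) (dsort q) := by
  have h := List.pairwise_mergeSort (le := fun a b : ℝ => decide (b ≤ a))
    (by intro a b c hab hbc; simp only [decide_eq_true_eq] at *; linarith)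
    (by intro a b; simpa using le_total b a) (List.ofFn q)
  simpa [dsort] using h

lemma nthLargest_eq_dsort {N : ℕ} (q : Fin N → ℝ) (i : ℕ) :
    nthLargest q i = (dsort q).getD (i-1) 0 := rfl

lemma countP_finRange {N : ℕ} (g : Fin N → Prop) [DecidablePred g] :
    (List.finRange N).countP (fun i => decide (g i)) = (univ.filter g).card := by
  have h : (univ : Finset (Fin N)).val = ↑(List.finRange N) := by rw [Fin.univ_def]
  rw [Finset.card, Finset.filter_val, ← Multiset.countP_eq_card_filter, h,
    Multiset.coe_countP]

lemma count_link {N : ℕ} (q : Fin N → ℝ) (P : ℝ → Prop) [DecidablePred P] :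
    (dsort q).countP (fun y => decide (P y)) = (univ.filter fun i => P (q i)).card := by
  rw [dsort, (List.mergeSort_perm (List.ofFn q) _).countP_eq, List.ofFn_eq_map,
    List.countP_map]
  exact countP_finRange _

/-- count of indices of a list version -/
lemma countP_eq_card_fin {l : List ℝ} (P : ℝ → Prop) [DecidablePred P] :
    l.countP (fun y => decide (P y)) = (univ.filter fun i : Fin l.length => P (l.get i)).card := by
  conv_lhs => rw [← List.ofFn_get l]
  rw [List.ofFn_eq_map, List.countP_map]
  exact countP_finRange _

lemma core1 {l : List ℝ} (hs : List.Pairwise (· ≥ ·) l) {i : ℕ} (hi : i < l.length) :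
    i + 1 ≤ l.countP (fun y => decide (l.get ⟨i, hi⟩ ≤ y)) := by
  rw [countP_eq_card_fin]
  have hsub : (univ.filter fun idx : Fin l.length => idx ≤ ⟨i, hi⟩)
      ⊆ (univ.filter fun idx : Fin l.length => l.get ⟨i, hi⟩ ≤ l.get idx) := by
    intro idx hidx
    simp only [mem_filter, mem_univ, true_and] at *
    exact hs.rel_get_of_le hidx
  have hcard : (univ.filter fun idx : Fin l.length => idx ≤ ⟨i, hi⟩).card = i + 1 := by
    have : (univ.filter fun idx : Fin l.length => idx ≤ ⟨i, hi⟩) = Finset.Iic ⟨i, hi⟩ := by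
      ext idx; simp
    rw [this, Fin.card_Iic]
  calc i + 1 = _ := hcard.symm
    _ ≤ _ := Finset.card_le_card hsub

lemma core2 {l : List ℝ} (hs : List.Pairwise (· ≥ ·) l) {i : ℕ} (hi : i < l.length) :
    l.countP (fun y => decide (l.get ⟨i, hi⟩ < y)) ≤ i := by
  rw [countP_eq_card_fin]
  have hsub : (univ.filter fun idx : Fin l.length => l.get ⟨i, hi⟩ < l.get idx)
      ⊆ (univ.filter fun idx : Fin l.length => idx < ⟨i, hi⟩) := by
    intro idx hidx
    simp only [mem_filter, mem_univ, true_and] at *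
    by_contra hle
    push_neg at hle
    exact absurd (hs.rel_get_of_le hle) (by linarith)
  have hcard : (univ.filter fun idx : Fin l.length => idx < ⟨i, hi⟩).card = i := by
    have : (univ.filter fun idx : Fin l.length => idx < ⟨i, hi⟩) = Finset.Iio ⟨i, hi⟩ := by
      ext idx; simp
    rw [this, Fin.card_Iio]
  calc _ ≤ _ := Finset.card_le_card hsub
    _ = i := hcard

/-- F1 : at least `k` indices have value `≥` the k-th largest. -/
lemma top_count_ge {N : ℕ} (q : Fin N → ℝ) {k : ℕ} (hk1 : 1 ≤ k) (hkN : k ≤ N) :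
    k ≤ (univ.filter fun i => nthLargest q k ≤ q i).card := by
  have hlen : k - 1 < (dsort q).length := by rw [dsort_length]; omega
  have hv : nthLargest q k = (dsort q).get ⟨k-1, hlen⟩ := by
    rw [nthLargest_eq_dsort, List.getD_eq_getElem _ _ hlen]; rfl
  rw [← count_link]
  have := core1 (dsort_sorted q) hlen
  rw [hv]
  omega

/-- F2 : fewer than `j` indices have value `>` the j-th largest. -/
lemma top_count_gt {N : ℕ} (q : Fin N → ℝ) {j : ℕ} (hj1 : 1 ≤ j) (hjN : j ≤ N) :
    (univ.filter fun i => nthLargest q j < q i).card ≤ j - 1 := by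
  have hlen : j - 1 < (dsort q).length := by rw [dsort_length]; omega
  have hv : nthLargest q j = (dsort q).get ⟨j-1, hlen⟩ := by
    rw [nthLargest_eq_dsort, List.getD_eq_getElem _ _ hlen]; rfl
  rw [← count_link, hv]
  exact core2 (dsort_sorted q) hlen

/-- lower bound on nthLargest from a count. -/
lemma le_nthLargest {N : ℕ} (q : Fin N → ℝ) {x : ℝ} {r : ℕ} (hr1 : 1 ≤ r)
    (hc : r ≤ (univ.filter fun i => x ≤ q i).card) :
    x ≤ nthLargest q r := by
  rw [← count_link] at hc
  have hlen : r - 1 < (dsort q).length :=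
    lt_of_lt_of_le (by omega : r - 1 < r) (le_trans hc List.countP_le_length)
  have hv : nthLargest q r = (dsort q).get ⟨r-1, hlen⟩ := by
    rw [nthLargest_eq_dsort, List.getD_eq_getElem _ _ hlen]; rfl
  rw [hv]
  by_contra hlt
  push_neg at hlt
  have hmono : (dsort q).countP (fun y => decide (x ≤ y))
      ≤ (dsort q).countP (fun y => decide ((dsort q).get ⟨r-1, hlen⟩ < y)) := by
    apply List.countP_mono_left
    intro a _ ha
    simp only [decide_eq_true_eq] at *
    linarith
  have := core2 (dsort_sorted q) hlen
  omega

/-- upper bound on nthLargest from a count. -/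
lemma nthLargest_le {N : ℕ} (q : Fin N → ℝ) {x : ℝ} {r : ℕ} (hr1 : 1 ≤ r) (hx : 0 ≤ x)
    (hc : (univ.filter fun i => x < q i).card ≤ r - 1) :
    nthLargest q r ≤ x := by
  rw [← count_link] at hc
  rw [nthLargest_eq_dsort]
  by_cases hlen : r - 1 < (dsort q).length
  · rw [List.getD_eq_getElem _ _ hlen]
    by_contra hlt
    push_neg at hlt
    have hmono : (dsort q).countP (fun y => decide ((dsort q).get ⟨r-1, hlen⟩ ≤ y))
        ≤ (dsort q).countP (fun y => decide (x < y)) := by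
      apply List.countP_mono_left
      intro a _ ha
      simp only [decide_eq_true_eq] at *
      have : (dsort q).get ⟨r-1, hlen⟩ ≤ a := ha
      calc x < (dsort q)[r-1] := hlt
        _ ≤ a := this
    have := core1 (dsort_sorted q) hlen
    omega
  · rw [List.getD_eq_default _ _ (by omega)]
    exact hx



variable {n : ℕ}

lemma fiber1_eq (i : Fin n) (y y' : Fin n) :
    (univ.filter fun σ : Equiv.Perm (Fin n) => σ i = y).card
      = (univ.filter fun σ : Equiv.Perm (Fin n) => σ i = y').card := by
  apply Finset.card_bij' (fun σ _ => Equiv.swap y y' * σ) (fun σ _ => Equiv.swap y y' * σ)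
  · intro σ hσ
    simp only [mem_filter, mem_univ, true_and] at *
    simp [Equiv.Perm.mul_apply, hσ]
  · intro σ hσ
    simp only [mem_filter, mem_univ, true_and] at *
    simp [Equiv.Perm.mul_apply, hσ, Equiv.swap_apply_right]
  · intro σ _; simp [← mul_assoc]
  · intro σ _; simp [← mul_assoc]

lemma fiber1_card (i y : Fin n) :
    (univ.filter fun σ : Equiv.Perm (Fin n) => σ i = y).card = (n-1).factorial := by
  have hn : 0 < n := i.pos
  have htot : (univ : Finset (Equiv.Perm (Fin n))).card
      = ∑ z : Fin n, (univ.filter fun σ : Equiv.Perm (Fin n) => σ i = z).card :=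
    Finset.card_eq_sum_card_fiberwise (fun σ _ => mem_univ (σ i))
  have hconst : ∀ z : Fin n, (univ.filter fun σ : Equiv.Perm (Fin n) => σ i = z).card
      = (univ.filter fun σ : Equiv.Perm (Fin n) => σ i = y).card :=
    fun z => fiber1_eq i z y
  rw [Finset.sum_congr rfl (fun z _ => hconst z), Finset.sum_const] at htot
  simp only [card_univ, Fintype.card_perm, Fintype.card_fin, smul_eq_mul] at htot
  have hfp := Nat.mul_factorial_pred hn.ne'
  exact Nat.eq_of_mul_eq_mul_left hn (by omega)

/-- a permutation sending a given pair of distinct points to another. -/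
lemma exists_perm_pair {y w y' w' : Fin n} (h1 : y ≠ w) (h2 : y' ≠ w') :
    ∃ τ : Equiv.Perm (Fin n), τ y = y' ∧ τ w = w' := by
  refine ⟨Equiv.swap (Equiv.swap y y' w) w' * Equiv.swap y y', ?_, ?_⟩
  · have hy : (Equiv.swap y y') y = y' := Equiv.swap_apply_left y y'
    simp only [Equiv.Perm.mul_apply, hy]
    apply Equiv.swap_apply_of_ne_of_ne
    · by_cases hw : w = y'
      · subst hw
        rw [Equiv.swap_apply_right]
        exact fun hc => h1 hc.symm
      · rw [Equiv.swap_apply_of_ne_of_ne h1.symm hw]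
        exact fun hc => hw hc.symm
    · exact h2
  · simp only [Equiv.Perm.mul_apply]
    rw [Equiv.swap_apply_left]

lemma fiber2_eq (i i' : Fin n) {y w y' w' : Fin n} (h1 : y ≠ w) (h2 : y' ≠ w') :
    (univ.filter fun σ : Equiv.Perm (Fin n) => σ i = y ∧ σ i' = w).card
      = (univ.filter fun σ : Equiv.Perm (Fin n) => σ i = y' ∧ σ i' = w').card := by
  obtain ⟨τ, hτy, hτw⟩ := exists_perm_pair h1 h2
  apply Finset.card_bij' (fun σ _ => τ * σ) (fun σ _ => τ⁻¹ * σ)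
  · intro σ hσ
    simp only [mem_filter, mem_univ, true_and] at *
    simp [Equiv.Perm.mul_apply, hσ.1, hσ.2, hτy, hτw]
  · intro σ hσ
    simp only [mem_filter, mem_univ, true_and] at *
    constructor
    · simp [Equiv.Perm.mul_apply, hσ.1, ← hτy]
    · simp [Equiv.Perm.mul_apply, hσ.2, ← hτw]
  · intro σ _; simp [← mul_assoc]
  · intro σ _; simp [← mul_assoc]

lemma fiber2_card {i i' : Fin n} (hii : i ≠ i') {y w : Fin n} (hyw : y ≠ w) :
    (univ.filter fun σ : Equiv.Perm (Fin n) => σ i = y ∧ σ i' = w).card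
      = (n-2).factorial := by
  have hn2 : 2 ≤ n := by
    by_contra h
    push_neg at h
    interval_cases n
    · exact absurd y.pos (by omega)
    · exact hyw (Subsingleton.elim y w)
  have htot : (univ : Finset (Equiv.Perm (Fin n))).card
      = ∑ z ∈ (univ ×ˢ univ : Finset (Fin n × Fin n)),
          (univ.filter fun σ : Equiv.Perm (Fin n) => σ i = z.1 ∧ σ i' = z.2).card := by
    have h0 := Finset.card_eq_sum_card_fiberwise
      (f := fun σ : Equiv.Perm (Fin n) => (σ i, σ i')) (s := univ)
      (t := univ ×ˢ univ) (fun σ _ => by simp)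
    rw [h0]
    apply Finset.sum_congr rfl
    intro z _
    congr 1
    apply Finset.filter_congr
    intro σ _
    simp [Prod.ext_iff]
  have hsplit : ∑ z ∈ (univ ×ˢ univ : Finset (Fin n × Fin n)),
          (univ.filter fun σ : Equiv.Perm (Fin n) => σ i = z.1 ∧ σ i' = z.2).card
      = ∑ z ∈ ((univ ×ˢ univ : Finset (Fin n × Fin n)).filter fun z => z.1 ≠ z.2),
          (univ.filter fun σ : Equiv.Perm (Fin n) => σ i = z.1 ∧ σ i' = z.2).card := by
    symm
    apply Finset.sum_subset (Finset.filter_subset _ _)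
    intro z _ hz
    simp only [Finset.mem_filter, Finset.mem_product, mem_univ, true_and, not_not,
      and_true] at hz
    rw [Finset.card_eq_zero]
    ext σ
    simp only [mem_filter, mem_univ, true_and, Finset.notMem_empty, iff_false]
    rintro ⟨h1', h2'⟩
    exact hii (σ.injective (h1'.trans (hz ▸ h2'.symm)))
  have hconst : ∀ z ∈ ((univ ×ˢ univ : Finset (Fin n × Fin n)).filter fun z => z.1 ≠ z.2),
      (univ.filter fun σ : Equiv.Perm (Fin n) => σ i = z.1 ∧ σ i' = z.2).card
      = (univ.filter fun σ : Equiv.Perm (Fin n) => σ i = y ∧ σ i' = w).card := by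
    intro z hz
    simp only [Finset.mem_filter] at hz
    exact fiber2_eq i i' hz.2 hyw
  have hoffcard : ((univ ×ˢ univ : Finset (Fin n × Fin n)).filter fun z => z.1 ≠ z.2).card
      = n * (n-1) := by
    have : ((univ ×ˢ univ : Finset (Fin n × Fin n)).filter fun z => z.1 ≠ z.2)
        = (univ : Finset (Fin n)).offDiag := by
      ext z; simp [Finset.mem_offDiag]
    rw [this, Finset.offDiag_card, card_univ, Fintype.card_fin, Nat.mul_sub, Nat.mul_one]
  rw [hsplit, Finset.sum_congr rfl hconst, Finset.sum_const, hoffcard] at htot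
  simp only [card_univ, Fintype.card_perm, Fintype.card_fin, smul_eq_mul] at htot
  -- n! = n*(n-1)*(n-2)!
  have hf1 : n * (n-1).factorial = n.factorial := Nat.mul_factorial_pred (by omega)
  have hf2 : (n-1) * (n-2).factorial = (n-1).factorial := by
    have := Nat.mul_factorial_pred (n := n-1) (by omega)
    simpa [show n - 1 - 1 = n - 2 by omega] using this
  have key : n * (n-1) * (n-2).factorial = n.factorial := by
    rw [mul_assoc, hf2, hf1]
  have hpos : 0 < n * (n-1) := Nat.mul_pos (by omega) (by omega)
  exact Nat.eq_of_mul_eq_mul_left hpos (by omega)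



variable {n : ℕ}

lemma P1 (i : Fin n) (C : Finset (Fin n)) :
    (univ.filter fun σ : Equiv.Perm (Fin n) => σ i ∈ C).card
      = C.card * (n-1).factorial := by
  rw [Finset.card_eq_sum_card_fiberwise (f := fun σ : Equiv.Perm (Fin n) => σ i)
    (s := univ.filter fun σ : Equiv.Perm (Fin n) => σ i ∈ C) (t := C) (fun σ hσ => (mem_filter.1 hσ).2)]
  have : ∀ y ∈ C, ((univ.filter fun σ : Equiv.Perm (Fin n) => σ i ∈ C).filter
      (fun σ => σ i = y)).card = (n-1).factorial := by
    intro y hy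
    have heq : ((univ.filter fun σ : Equiv.Perm (Fin n) => σ i ∈ C).filter
        (fun σ => σ i = y)) = univ.filter (fun σ : Equiv.Perm (Fin n) => σ i = y) := by
      ext σ
      simp only [mem_filter, mem_univ, true_and]
      exact ⟨fun h => h.2, fun h => ⟨by rw [h]; exact hy, h⟩⟩
    rw [heq]
    exact fiber1_card i y
  rw [Finset.sum_congr rfl this, Finset.sum_const, smul_eq_mul]

lemma P2 {i i' : Fin n} (hii : i ≠ i') (C : Finset (Fin n)) :
    (univ.filter fun σ : Equiv.Perm (Fin n) => σ i ∈ C ∧ σ i' ∈ C).card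
      = (C.card * (C.card - 1)) * (n-2).factorial := by
  rw [Finset.card_eq_sum_card_fiberwise (f := fun σ : Equiv.Perm (Fin n) => (σ i, σ i'))
    (s := univ.filter fun σ : Equiv.Perm (Fin n) => σ i ∈ C ∧ σ i' ∈ C) (t := C ×ˢ C) (fun σ hσ => by
      simp only [Finset.mem_coe, mem_filter] at hσ; simp [Finset.mem_product, hσ.2.1, hσ.2.2])]
  have hfib : ∀ z ∈ C ×ˢ C, ((univ.filter fun σ : Equiv.Perm (Fin n) => σ i ∈ C ∧ σ i' ∈ C).filter
      (fun σ => (σ i, σ i') = z)).card = if z.1 ≠ z.2 then (n-2).factorial else 0 := by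
    intro z hz
    simp only [Finset.mem_product] at hz
    rw [Finset.filter_filter]
    split_ifs with hne
    · have heq : (univ.filter fun σ : Equiv.Perm (Fin n) => (σ i ∈ C ∧ σ i' ∈ C) ∧ (σ i, σ i') = z)
          = univ.filter (fun σ : Equiv.Perm (Fin n) => σ i = z.1 ∧ σ i' = z.2) := by
        ext σ
        simp only [mem_filter, mem_univ, true_and, Prod.ext_iff]
        constructor
        · rintro ⟨-, h⟩; exact h
        · rintro ⟨h1, h2⟩
          exact ⟨⟨by rw [h1]; exact hz.1, by rw [h2]; exact hz.2⟩, h1, h2⟩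
      rw [heq]
      exact fiber2_card hii hne
    · push_neg at hne
      rw [Finset.card_eq_zero]
      ext σ
      simp only [mem_filter, mem_univ, true_and, Finset.notMem_empty, iff_false]
      rintro ⟨-, h⟩
      have h1 : σ i = z.1 := congrArg Prod.fst h
      have h2 : σ i' = z.2 := congrArg Prod.snd h
      exact hii (σ.injective (by rw [h1, h2, hne]))
  rw [Finset.sum_congr rfl hfib, Finset.sum_ite, Finset.sum_const_zero, add_zero,
    Finset.sum_const, smul_eq_mul]
  congr 1
  have : (C ×ˢ C).filter (fun z => z.1 ≠ z.2) = C.offDiag := by ext z; simp [Finset.mem_offDiag, and_assoc]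
  rw [this, Finset.offDiag_card, Nat.mul_sub, Nat.mul_one]

variable {s : ℕ}

/-- number of sample positions landing in `C` -/
def Xc (ι : Fin s → Fin n) (C : Finset (Fin n)) (σ : Equiv.Perm (Fin n)) : ℕ :=
  (univ.filter fun a : Fin s => σ (ι a) ∈ C).card

lemma sumX_nat (ι : Fin s → Fin n) (C : Finset (Fin n)) :
    ∑ σ : Equiv.Perm (Fin n), Xc ι C σ = s * (C.card * (n-1).factorial) := by
  have : ∀ σ : Equiv.Perm (Fin n), Xc ι C σ
      = ∑ a : Fin s, if σ (ι a) ∈ C then 1 else 0 := by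
    intro σ; rw [Xc, Finset.card_filter]
  rw [Finset.sum_congr rfl (fun σ _ => this σ), Finset.sum_comm]
  have inner : ∀ a : Fin s, ∑ σ : Equiv.Perm (Fin n), (if σ (ι a) ∈ C then 1 else 0)
      = C.card * (n-1).factorial := by
    intro a
    rw [← Finset.card_filter]
    exact P1 (ι a) C
  rw [Finset.sum_congr rfl (fun a _ => inner a), Finset.sum_const, smul_eq_mul, card_univ,
    Fintype.card_fin]

lemma sumX2_nat (ι : Fin s → Fin n) (hι : Function.Injective ι) (C : Finset (Fin n)) :
    ∑ σ : Equiv.Perm (Fin n), (Xc ι C σ)^2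
      = s * (C.card * (n-1).factorial)
        + (s * (s-1)) * ((C.card * (C.card - 1)) * (n-2).factorial) := by
  have hX : ∀ σ : Equiv.Perm (Fin n), (Xc ι C σ)^2
      = ∑ a : Fin s, ∑ b : Fin s,
          (if σ (ι a) ∈ C ∧ σ (ι b) ∈ C then 1 else 0) := by
    intro σ
    rw [Xc, Finset.card_filter, sq, Finset.sum_mul_sum]
    apply Finset.sum_congr rfl; intro a _
    apply Finset.sum_congr rfl; intro b _
    by_cases h1 : σ (ι a) ∈ C <;> by_cases h2 : σ (ι b) ∈ C <;> simp [h1, h2]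
  rw [Finset.sum_congr rfl (fun σ _ => hX σ), Finset.sum_comm]
  have swap2 : ∀ a : Fin s, ∑ σ : Equiv.Perm (Fin n), ∑ b : Fin s,
        (if σ (ι a) ∈ C ∧ σ (ι b) ∈ C then 1 else 0)
      = ∑ b : Fin s, ∑ σ : Equiv.Perm (Fin n),
        (if σ (ι a) ∈ C ∧ σ (ι b) ∈ C then 1 else 0) := fun a => Finset.sum_comm
  rw [Finset.sum_congr rfl (fun a _ => swap2 a)]
  have inner : ∀ a b : Fin s, ∑ σ : Equiv.Perm (Fin n),
      (if σ (ι a) ∈ C ∧ σ (ι b) ∈ C then 1 else 0)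
      = if a = b then C.card * (n-1).factorial
        else (C.card * (C.card - 1)) * (n-2).factorial := by
    intro a b
    rw [← Finset.card_filter]
    split_ifs with hab
    · subst hab
      have heq : (univ.filter fun σ : Equiv.Perm (Fin n) => σ (ι a) ∈ C ∧ σ (ι a) ∈ C)
          = univ.filter fun σ : Equiv.Perm (Fin n) => σ (ι a) ∈ C := by
        ext σ; simp
      rw [heq]
      exact P1 (ι a) C
    · exact P2 (fun h => hab (hι h)) C
  rw [Finset.sum_congr rfl (fun a _ => Finset.sum_congr rfl (fun b _ => inner a b))]
  have row : ∀ a : Fin s, ∑ b : Fin s, (if a = b then C.card * (n-1).factorial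
        else (C.card * (C.card - 1)) * (n-2).factorial)
      = C.card * (n-1).factorial + (s-1) * ((C.card * (C.card - 1)) * (n-2).factorial) := by
    intro a
    rw [Finset.sum_eq_sum_sdiff_singleton_add (Finset.mem_univ a)]
    have hconst : ∀ b ∈ (univ : Finset (Fin s)) \ {a},
        (if a = b then C.card * (n-1).factorial
          else (C.card * (C.card - 1)) * (n-2).factorial)
        = (C.card * (C.card - 1)) * (n-2).factorial := by
      intro b hb
      simp only [Finset.mem_sdiff, Finset.mem_singleton] at hb
      rw [if_neg (fun h => hb.2 h.symm)]
    rw [Finset.sum_congr rfl hconst, Finset.sum_const, smul_eq_mul, if_pos rfl]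
    have hcard : ((univ : Finset (Fin s)) \ {a}).card = s - 1 := by
      rw [Finset.card_sdiff_of_subset (by simp), Finset.card_singleton, card_univ, Fintype.card_fin]
    rw [hcard, add_comm]
  rw [Finset.sum_congr rfl (fun a _ => row a), Finset.sum_const, smul_eq_mul, card_univ,
    Fintype.card_fin]
  ring



lemma cantelli {α : Type*} [Fintype α] [DecidableEq α] (X : α → ℝ) (μ lam v : ℝ)
    (B : Finset α) (ε : ℝ) (hε : ε = 1 ∨ ε = -1)
    (hsum : ∑ σ : α, X σ = (Fintype.card α : ℝ) * μ)
    (hvar : ∑ σ : α, (X σ - μ)^2 ≤ (Fintype.card α : ℝ) * v)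
    (c : ℝ) (hc : 0 < c)
    (hB : ∀ σ ∈ B, c ≤ ε * (X σ - μ) + lam) :
    (B.card : ℝ) * c^2 ≤ (Fintype.card α : ℝ) * (v + lam^2) := by
  have hsq : ∀ σ ∈ B, c^2 ≤ (ε * (X σ - μ) + lam)^2 := by
    intro σ hσ
    have := hB σ hσ
    nlinarith
  have h1 : (B.card : ℝ) * c^2 ≤ ∑ σ ∈ B, (ε * (X σ - μ) + lam)^2 := by
    calc (B.card : ℝ) * c^2 = ∑ _σ ∈ B, c^2 := by rw [Finset.sum_const, nsmul_eq_mul]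
      _ ≤ _ := Finset.sum_le_sum hsq
  have h2 : ∑ σ ∈ B, (ε * (X σ - μ) + lam)^2 ≤ ∑ σ : α, (ε * (X σ - μ) + lam)^2 :=
    Finset.sum_le_sum_of_subset_of_nonneg (Finset.subset_univ B)
      (fun σ _ _ => sq_nonneg _)
  have hε2 : ε^2 = 1 := by rcases hε with h | h <;> rw [h] <;> norm_num
  have hzero : ∑ σ : α, (X σ - μ) = 0 := by
    rw [Finset.sum_sub_distrib, hsum, Finset.sum_const, card_univ, nsmul_eq_mul]
    ring
  have h3 : ∑ σ : α, (ε * (X σ - μ) + lam)^2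
      = ∑ σ : α, (X σ - μ)^2 + (2 * ε * lam) * (∑ σ : α, (X σ - μ))
        + (Fintype.card α : ℝ) * lam^2 := by
    rw [Finset.mul_sum,
      show (Fintype.card α : ℝ) * lam^2 = ∑ _σ : α, lam^2 by
        rw [Finset.sum_const, card_univ, nsmul_eq_mul],
      ← Finset.sum_add_distrib, ← Finset.sum_add_distrib]
    apply Finset.sum_congr rfl
    intro σ _
    nlinarith [sq_nonneg (X σ - μ)]
  rw [hzero, mul_zero, add_zero] at h3
  calc (B.card : ℝ) * c^2 ≤ _ := h1
    _ ≤ _ := h2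
    _ = _ := h3
    _ ≤ (Fintype.card α : ℝ) * v + (Fintype.card α : ℝ) * lam^2 := by linarith
    _ = _ := by ring

-- key per-side Cantelli bound : 23 · |B| ≤ 7 · n!
set_option maxHeartbeats 1000000 in
lemma side_bound {n s : ℕ} (hn : n = 8*s) (hs : 1 ≤ s)
    (ι : Fin s → Fin n) (hι : Function.Injective ι)
    (C : Finset (Fin n)) (m : ℕ) (hm : 1 ≤ m) (hCm : C.card ≤ m) (hmn : m ≤ n)
    (B : Finset (Equiv.Perm (Fin n))) (ε : ℝ) (hε : ε = 1 ∨ ε = -1) (t : ℝ)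
    (ht : Real.sqrt m / 2 ≤ t)
    (hB : ∀ σ ∈ B, t ≤ ε * ((Xc ι C σ : ℝ) - (C.card : ℝ)/8)) :
    (B.card : ℝ) * 23 ≤ (Fintype.card (Equiv.Perm (Fin n)) : ℝ) * 7 := by
  classical
  set c : ℕ := C.card with hcdef
  set F2 : ℕ := (n-2).factorial with hF2def
  set F1 : ℕ := (n-1).factorial with hF1def
  have hn2 : 2 ≤ n := by omega
  -- real cast facts
  have e1 : (F1 : ℝ) = (8*(s:ℝ) - 1) * (F2 : ℝ) := by
    have h2 : F1 = (n-1) * F2 := by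
      have := Nat.mul_factorial_pred (n := n-1) (show n-1 ≠ 0 by omega)
      rw [show n-1-1 = n-2 by omega] at this
      rw [hF1def, hF2def, this]
    rw [h2, Nat.cast_mul, Nat.cast_sub (show 1 ≤ n by omega)]
    push_cast [hn]
    ring
  have e2 : (Fintype.card (Equiv.Perm (Fin n)) : ℝ) = 8*(s:ℝ) * (F1 : ℝ) := by
    rw [Fintype.card_perm, Fintype.card_fin]
    have h1 : n.factorial = n * F1 := (Nat.mul_factorial_pred (by omega)).symm
    rw [h1]
    push_cast [hn]
    ring
  have e3 : ∑ σ : Equiv.Perm (Fin n), ((Xc ι C σ : ℝ)) = (s:ℝ) * c * F1 := by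
    rw [← Nat.cast_sum]
    rw [sumX_nat ι C]
    push_cast
    ring
  have e4 : ∑ σ : Equiv.Perm (Fin n), ((Xc ι C σ : ℝ))^2
      = (s:ℝ) * c * F1 + ((s:ℝ)^2 - s) * ((c:ℝ)^2 - c) * F2 := by
    have hcast : ∀ σ : Equiv.Perm (Fin n), ((Xc ι C σ : ℝ))^2 = ((Xc ι C σ ^2 : ℕ) : ℝ) := by
      intro σ; push_cast; ring
    rw [Finset.sum_congr rfl (fun σ _ => hcast σ), ← Nat.cast_sum, sumX2_nat ι hι C]
    have hss : ((s * (s-1) : ℕ) : ℝ) = (s:ℝ)^2 - s := by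
      rw [Nat.mul_sub, Nat.mul_one, Nat.cast_sub (Nat.le_mul_of_pos_left s hs)]
      push_cast; ring
    have hcc : ((c * (c-1) : ℕ) : ℝ) = (c:ℝ)^2 - c := by
      rcases Nat.eq_zero_or_pos c with h | h
      · rw [h]; norm_num
      · rw [Nat.mul_sub, Nat.mul_one, Nat.cast_sub (Nat.le_mul_of_pos_left c h)]
        push_cast; ring
    rw [← hcdef, ← hF1def, ← hF2def, Nat.cast_add, Nat.cast_mul (s * (s-1)), hss,
      Nat.cast_mul (c * (c-1)), hcc]
    push_cast
    ring
  -- moments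
  set N : ℝ := (Fintype.card (Equiv.Perm (Fin n)) : ℝ) with hNdef
  have hNpos : 0 < N := by
    rw [hNdef]
    exact_mod_cast Fintype.card_pos
  have M1 : ∑ σ : Equiv.Perm (Fin n), ((Xc ι C σ : ℝ)) = N * ((c:ℝ)/8) := by
    rw [e3, e2, e1]
    ring
  have key : (c:ℝ) * (8*(s:ℝ) - c) ≤ (m:ℝ) * (8*(s:ℝ) - 1) := by
    have hcm : (c:ℝ) ≤ (m:ℝ) := by exact_mod_cast hCm
    have hcn : (c:ℝ) ≤ 8*(s:ℝ) := by
      have : c ≤ n := hcdef ▸ le_trans (Finset.card_le_univ C) (by simp)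
      rw [hn] at this
      exact_mod_cast this
    rcases Nat.eq_zero_or_pos c with h | h
    · rw [h]
      push_cast
      have : (1:ℝ) ≤ m := by exact_mod_cast hm
      nlinarith
    · have h1 : (1:ℝ) ≤ (c:ℝ) := by exact_mod_cast h
      nlinarith
  have M2 : ∑ σ : Equiv.Perm (Fin n), (((Xc ι C σ : ℝ)) - (c:ℝ)/8)^2
      ≤ N * (7*(m:ℝ)/64) := by
    have expand : ∑ σ : Equiv.Perm (Fin n), (((Xc ι C σ : ℝ)) - (c:ℝ)/8)^2
        = (∑ σ : Equiv.Perm (Fin n), ((Xc ι C σ : ℝ))^2)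
          - 2*((c:ℝ)/8) * (∑ σ : Equiv.Perm (Fin n), ((Xc ι C σ : ℝ)))
          + N * ((c:ℝ)/8)^2 := by
      rw [Finset.mul_sum,
        show N * ((c:ℝ)/8)^2 = ∑ _σ : Equiv.Perm (Fin n), ((c:ℝ)/8)^2 by
          rw [Finset.sum_const, card_univ, nsmul_eq_mul, hNdef],

        ← Finset.sum_sub_distrib, ← Finset.sum_add_distrib]
      apply Finset.sum_congr rfl
      intro σ _
      ring
    rw [expand, M1, e4, e2, e1]
    have hF2pos : (0:ℝ) ≤ (F2:ℝ) := by positivity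
    have hspos : (1:ℝ) ≤ (s:ℝ) := by exact_mod_cast hs
    nlinarith [mul_nonneg (mul_nonneg (by linarith : (0:ℝ) ≤ (s:ℝ)) hF2pos)
      (sub_nonneg.2 key)]
  -- apply cantelli
  have hsm : (1:ℝ) ≤ Real.sqrt m := by
    rw [show (1:ℝ) = Real.sqrt 1 by simp]
    exact Real.sqrt_le_sqrt (by exact_mod_cast hm)
  have hsqm : Real.sqrt m ^ 2 = (m:ℝ) := Real.sq_sqrt (by positivity)
  have hfin := cantelli (fun σ => ((Xc ι C σ : ℝ))) ((c:ℝ)/8) (7*Real.sqrt m/32)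
    (7*(m:ℝ)/64) B ε hε M1 M2 (23*Real.sqrt m/32) (by linarith)
    (fun σ hσ => by
      have h := hB σ hσ
      linarith)
  have hm1 : (1:ℝ) ≤ (m:ℝ) := by exact_mod_cast hm
  have hq1 : (23*Real.sqrt m/32)^2 = 529*(m:ℝ)/1024 := by
    rw [div_pow, mul_pow, hsqm]; ring
  have hq2 : 7*(m:ℝ)/64 + (7*Real.sqrt m/32)^2 = 161*(m:ℝ)/1024 := by
    rw [div_pow, mul_pow, hsqm]; ring
  rw [hq1, hq2] at hfin
  have hstep : (B.card:ℝ) * 529 * (m:ℝ) ≤ N * 161 * (m:ℝ) := by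
    linear_combination 1024 * hfin
  have hdiv : (B.card:ℝ) * 529 ≤ N * 161 :=
    le_of_mul_le_mul_right (by
      calc ((B.card:ℝ) * 529) * (m:ℝ) = (B.card:ℝ) * 529 * (m:ℝ) := by ring
        _ ≤ N * 161 * (m:ℝ) := hstep
        _ = (N * 161) * (m:ℝ) := by ring) (by linarith)
  linarith



lemma nthLargest_nonneg {N : ℕ} {q : Fin N → ℝ} (hq : ∀ i, 0 ≤ q i) (i : ℕ) :
    0 ≤ nthLargest q i := by
  rw [nthLargest_eq_dsort]
  by_cases h : i - 1 < (dsort q).length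
  · rw [List.getD_eq_getElem _ _ h]
    have hm : (dsort q)[i-1] ∈ dsort q := List.getElem_mem _
    have hmem : (dsort q)[i-1] ∈ List.ofFn q := (List.mergeSort_perm _ _).subset hm
    rw [List.mem_ofFn] at hmem
    obtain ⟨a, ha⟩ := hmem
    rw [← ha]
    exact hq a
  · rw [List.getD_eq_default _ _ (le_of_not_gt h)]

end Stmt8Aux


open Stmt8Aux in
set_option maxHeartbeats 1000000 in
/-- For a proper instance of degree `d` (with `n ≥ m`, `8 ∣ n`,
`m − m^{3/4}/50 < k < m` large jobs and `d = ⌈log₂(m−k)⌉`), let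
`r = ⌈(m−2^d)/8 − √m/2⌉ ≥ 1` and `j = ⌊k − 8√m − 2^d⌋ ≥ 1`. For a uniformly random
permutation `σ`, with `P↑` the `r`-th largest size among the first `n/8` jobs of the
order, `P_σ[P_j ≥ P↑ ≥ P_k] ≥ 1/3`. -/
theorem stmt8 {n m : ℕ} (hm : 1 ≤ m) (hnm : m ≤ n) (h8 : 8 ∣ n)
    (p : Fin n → ℝ) (hp : ∀ i, 0 ≤ p i)
    (k : ℕ)
    (hk : k = (Finset.univ.filter
      (fun i => OPT m p / (100 * (m : ℝ) ^ ((1 : ℝ) / 4)) < p i)).card)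
    (hk1 : (m : ℝ) - (m : ℝ) ^ ((3 : ℝ) / 4) / 50 < k) (hk2 : k < m)
    (d : ℕ) (hd : d = Nat.clog 2 (m - k))
    (r : ℕ) (hr : (r : ℤ) = ⌈((m : ℝ) - 2 ^ d) / 8 - Real.sqrt m / 2⌉) (hr1 : 1 ≤ r)
    (j : ℕ) (hj : (j : ℤ) = ⌊(k : ℝ) - 8 * Real.sqrt m - 2 ^ d⌋) (hj1 : 1 ≤ j) :
    Fintype.card (Equiv.Perm (Fin n)) ≤
      3 * ((Finset.univ : Finset (Equiv.Perm (Fin n))).filter (fun σ =>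
        nthLargest p k ≤ PupOf p r σ ∧ PupOf p r σ ≤ nthLargest p j)).card := by
  classical
  -- basic setup
  have hn8 : n = 8 * (n / 8) := (Nat.mul_div_cancel' h8).symm
  have hs1 : 1 ≤ n / 8 := by omega
  set ι : Fin (n / 8) → Fin n := Fin.castLE (Nat.div_le_self n 8) with hιdef
  have hι : Function.Injective ι := Fin.castLE_injective _
  -- real number facts
  have hsm1 : (1:ℝ) ≤ Real.sqrt m := by
    rw [show (1:ℝ) = Real.sqrt 1 by simp]
    exact Real.sqrt_le_sqrt (by exact_mod_cast hm)
  have h2d : ((m : ℝ) - k) ≤ 2^d := by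
    have h1 : m - k ≤ 2^d := hd ▸ Nat.le_pow_clog one_lt_two (m - k)
    have h2 : ((m - k : ℕ) : ℝ) = (m:ℝ) - k := by
      rw [Nat.cast_sub (le_of_lt hk2)]
    rw [← h2]
    exact_mod_cast h1
  have hrlt : (r:ℝ) < ((m : ℝ) - 2 ^ d) / 8 - Real.sqrt m / 2 + 1 := by
    have h1 := Int.ceil_lt_add_one (((m : ℝ) - 2 ^ d) / 8 - Real.sqrt m / 2)
    rw [← hr] at h1
    exact_mod_cast h1
  have hrge : ((m : ℝ) - 2 ^ d) / 8 - Real.sqrt m / 2 ≤ (r:ℝ) := by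
    have h1 := Int.le_ceil (((m : ℝ) - 2 ^ d) / 8 - Real.sqrt m / 2)
    rw [← hr] at h1
    exact_mod_cast h1
  have hjle : (j:ℝ) ≤ (k : ℝ) - 8 * Real.sqrt m - 2 ^ d := by
    have h1 := Int.floor_le ((k : ℝ) - 8 * Real.sqrt m - 2 ^ d)
    rw [← hj] at h1
    exact_mod_cast h1
  have h2dpos : (1:ℝ) ≤ (2:ℝ)^d := one_le_pow₀ (by norm_num)
  have hj1R : (1:ℝ) ≤ (j:ℝ) := by exact_mod_cast hj1
  have hkR : (k:ℝ) ≤ (m:ℝ) := by exact_mod_cast le_of_lt hk2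
  have hk1' : 1 ≤ k := by
    by_contra h
    push_neg at h
    interval_cases k
    simp only [Nat.cast_zero] at hjle
    linarith
  have hjk : j < k := by
    have : (j:ℝ) < (k:ℝ) := by linarith
    exact_mod_cast this
  have hkn : k ≤ n := le_trans (le_of_lt hk2) hnm
  have hjn : j ≤ n := le_trans (le_of_lt hjk) hkn
  -- the sets C (top k) and A (strictly above P_j)
  obtain ⟨C, hCsub, hCcard⟩ := Finset.exists_subset_card_eq (top_count_ge p hk1' hkn)
  set A : Finset (Fin n) := univ.filter (fun i => nthLargest p j < p i) with hAdef
  have hAcard : A.card ≤ j - 1 := top_count_gt p hj1 hjn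
  have hAcardR : (A.card : ℝ) ≤ (j:ℝ) - 1 := by
    have h1 : ((j - 1 : ℕ) : ℝ) = (j:ℝ) - 1 := by
      rw [Nat.cast_sub hj1]; norm_num
    rw [← h1]
    exact_mod_cast hAcard
  have hAm : A.card ≤ m := le_trans hAcard (by omega)
  -- bad sets
  set B1 : Finset (Equiv.Perm (Fin n)) := univ.filter (fun σ => Xc ι C σ < r) with hB1def
  set B2 : Finset (Equiv.Perm (Fin n)) := univ.filter (fun σ => r ≤ Xc ι A σ) with hB2def
  -- good events
  have hgood : ∀ σ : Equiv.Perm (Fin n), σ ∉ B1 → σ ∉ B2 →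
      nthLargest p k ≤ PupOf p r σ ∧ PupOf p r σ ≤ nthLargest p j := by
    intro σ hσ1 hσ2
    rw [hB1def, Finset.mem_filter, not_and] at hσ1
    rw [hB2def, Finset.mem_filter, not_and] at hσ2
    have h1 : r ≤ Xc ι C σ := le_of_not_gt (hσ1 (mem_univ σ))
    have h2 : Xc ι A σ < r := lt_of_not_ge (hσ2 (mem_univ σ))
    constructor
    · apply le_nthLargest _ hr1
      refine le_trans h1 (Finset.card_le_card ?_)
      intro a ha
      simp only [Finset.mem_filter, mem_univ, true_and] at *
      have := hCsub ha
      simp only [Finset.mem_filter, mem_univ, true_and] at this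
      exact this
    · apply nthLargest_le _ hr1 (nthLargest_nonneg hp j)
      have heq : (univ.filter fun a : Fin (n/8) => nthLargest p j < p (σ (ι a)))
          = univ.filter (fun a : Fin (n/8) => σ (ι a) ∈ A) := by
        ext a
        simp [hAdef]
      calc (univ.filter fun a : Fin (n/8) => nthLargest p j < p (σ (ι a))).card
          = Xc ι A σ := by rw [heq]; rfl
        _ ≤ r - 1 := by omega
  -- side bounds
  have hside1 : (B1.card : ℝ) * 23 ≤ (Fintype.card (Equiv.Perm (Fin n)) : ℝ) * 7 := by
    apply side_bound hn8 hs1 ι hι C m hm (hCcard ▸ le_of_lt hk2) hnm B1 (-1) (Or.inr rfl)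
      ((k:ℝ)/8 - ((r:ℝ) - 1))
    · linarith
    · intro σ hσ
      rw [hB1def, Finset.mem_filter] at hσ
      have : (Xc ι C σ : ℝ) ≤ (r:ℝ) - 1 := by
        have : Xc ι C σ + 1 ≤ r := hσ.2
        have := (Nat.cast_le (α := ℝ)).2 this
        push_cast at this
        linarith
      rw [hCcard]
      linarith
  have hside2 : (B2.card : ℝ) * 23 ≤ (Fintype.card (Equiv.Perm (Fin n)) : ℝ) * 7 := by
    apply side_bound hn8 hs1 ι hι A m hm hAm hnm B2 1 (Or.inl rfl)
      ((r:ℝ) - (A.card : ℝ)/8)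
    · linarith
    · intro σ hσ
      rw [hB2def, Finset.mem_filter] at hσ
      have : (r:ℝ) ≤ (Xc ι A σ : ℝ) := by exact_mod_cast hσ.2
      linarith
  -- assemble
  have hcount : Fintype.card (Equiv.Perm (Fin n))
      ≤ ((univ : Finset (Equiv.Perm (Fin n))).filter (fun σ =>
          nthLargest p k ≤ PupOf p r σ ∧ PupOf p r σ ≤ nthLargest p j)).card
        + B1.card + B2.card := by
    have hsub : univ \ (B1 ∪ B2) ⊆ (univ : Finset (Equiv.Perm (Fin n))).filter (fun σ =>
        nthLargest p k ≤ PupOf p r σ ∧ PupOf p r σ ≤ nthLargest p j) := by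
      intro σ hσ
      rw [Finset.mem_sdiff, Finset.mem_union] at hσ
      push_neg at hσ
      rw [Finset.mem_filter]
      exact ⟨mem_univ σ, hgood σ hσ.2.1 hσ.2.2⟩
    have h1 : (univ \ (B1 ∪ B2)).card = Fintype.card (Equiv.Perm (Fin n)) - (B1 ∪ B2).card := by
      rw [Finset.card_sdiff_of_subset (Finset.subset_univ _), Finset.card_univ]
    have h2 := Finset.card_le_card hsub
    have h3 := Finset.card_union_le B1 B2
    have h4 : (B1 ∪ B2).card ≤ Fintype.card (Equiv.Perm (Fin n)) := by
      rw [← Finset.card_univ]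
      exact Finset.card_le_card (Finset.subset_univ _)
    omega
  have hcountR : (Fintype.card (Equiv.Perm (Fin n)) : ℝ)
      ≤ (((univ : Finset (Equiv.Perm (Fin n))).filter (fun σ =>
          nthLargest p k ≤ PupOf p r σ ∧ PupOf p r σ ≤ nthLargest p j)).card : ℝ)
        + B1.card + B2.card := by exact_mod_cast hcount
  have hfinal : (Fintype.card (Equiv.Perm (Fin n)) : ℝ)
      ≤ 3 * (((univ : Finset (Equiv.Perm (Fin n))).filter (fun σ =>
          nthLargest p k ≤ PupOf p r σ ∧ PupOf p r σ ≤ nthLargest p j)).card : ℝ) := by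
    linarith
  exact_mod_cast hfinal
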